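/- Every fixed point of a primitive substitution over a finite alphabet is uniformly recurrent: if σ : Σ → Σ⁺ is a substitution such that for some k ≥ 1 every letter of Σ occurs in σ^k(b) for every b ∈ Σ, and u is an infinite word with σ(u) = u, then every factor of u occurs in u with bounded gaps. -/

import Mathlib

/-- Partial sums of a sequence of run lengths. -/
def partialSum (t : ℕ → ℕ) : ℕ → ℕ
  | 0 => 0
  | k + 1 => partialSum t k + t k

/-- The `k`-th iterate `σ^k(b)` of a substitution `s` applied to a letter. -/
def substIter {α : Type*} (s : α → List α) : ℕ → α → List α
  | 0, b => [b]
  | k + 1, b => ((substIter s k b).map s).flatten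

/-- `u` is a fixed point of the substitution `s`, i.e.
`u = s(u 0) s(u 1) s(u 2) ⋯`. -/
def SubstFix {α : Type*} (s : α → List α) (u : ℕ → α) : Prop :=
  ∀ i k, (h : k < (s (u i)).length) →
    u (partialSum (fun j => (s (u j)).length) i + k) = (s (u i)).get ⟨k, h⟩

/-- The finite word `f` occurs in `w` at position `p`. -/
def factorAt {α : Type*} (w : ℕ → α) (p : ℕ) (f : List α) : Prop :=
  List.ofFn (fun j : Fin f.length => w (p + j)) = f

/-- `w` is uniformly recurrent: every factor occurs with bounded gaps. -/
def UniformlyRecurrent {α : Type*} (w : ℕ → α) : Prop :=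
  ∀ f : List α, (∃ p, factorAt w p f) →
    ∃ N, ∀ p, ∃ q, p ≤ q ∧ q ≤ p + N ∧ factorAt w q f

lemma factorAt_iff {α : Type*} {w : ℕ → α} {p : ℕ} {f : List α} :
    factorAt w p f ↔ ∀ j (h : j < f.length), w (p + j) = f.get ⟨j, h⟩ := by
  unfold factorAt
  constructor
  · intro h j hj
    have := List.get_of_eq h ⟨j, by simpa using hj⟩
    simpa using this
  · intro h
    apply List.ext_get (by simp)
    intro i h1 h2
    simpa using h i h2

lemma partialSum_add (t : ℕ → ℕ) (a b : ℕ) :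
    partialSum t (a + b) = partialSum t a + partialSum (fun j => t (a + j)) b := by
  induction b with
  | zero => simp [partialSum]
  | succ b ih => simp [partialSum, ih]; omega

lemma factorAt_nil {α : Type*} (w : ℕ → α) (a : ℕ) : factorAt w a ([] : List α) := by
  simp [factorAt]

lemma factorAt_append {α : Type*} {w : ℕ → α} {a : ℕ} {v x : List α}
    (hv : factorAt w a v) (hx : factorAt w (a + v.length) x) :
    factorAt w a (v ++ x) := by
  rw [factorAt_iff] at *
  intro j hj
  rw [List.get_eq_getElem]
  rcases lt_or_ge j v.length with h | h
  · rw [List.getElem_append_left h]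
    simpa using hv j h
  · rw [List.getElem_append_right h]
    have hj' : j - v.length < x.length := by
      simp only [List.length_append] at hj; omega
    have := hx (j - v.length) hj'
    simp only [List.get_eq_getElem] at this
    rw [← this]
    congr 1
    omega

lemma flatten_map_flatten {α β : Type*} (g : α → List β) (L : List (List α)) :
    (L.flatten.map g).flatten = (L.map (fun l => (l.map g).flatten)).flatten := by
  induction L with
  | nil => simp
  | cons c L ih => simp [ih, List.flatten_flatten, List.map_map, Function.comp_def]

lemma substIter_comp {α : Type*} (s : α → List α) (a b : ℕ) (c : α) :
    substIter s (a + b) c = ((substIter s b c).map (substIter s a)).flatten := by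
  induction a with
  | zero =>
    rw [Nat.zero_add]
    generalize substIter s b c = l
    induction l with
    | nil => rfl
    | cons d l ih =>
      simp only [List.map_cons, List.flatten_cons]
      show d :: l = [d] ++ _
      rw [List.singleton_append, ← ih]
  | succ a ih =>
    have : a + 1 + b = (a + b) + 1 := by omega
    rw [this]
    show ((substIter s (a+b) c).map s).flatten = _
    rw [ih, flatten_map_flatten]
    congr 1
    rw [List.map_map]
    rfl

lemma substIter_length_pos {α : Type*} (s : α → List α) (hne : ∀ b, s b ≠ [])
    (m : ℕ) (b : α) : 0 < (substIter s m b).length := by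
  induction m with
  | zero => simp [substIter]
  | succ m ih =>
    show 0 < ((substIter s m b).map s).flatten.length
    cases h : substIter s m b with
    | nil => rw [h] at ih; simp at ih
    | cons c l =>
      simp only [List.map_cons, List.flatten_cons, List.length_append]
      have := List.length_pos_of_ne_nil (hne c)
      omega

/-- Start position of the level-`m` block with index `i`. -/
def Rpos {α : Type*} (s : α → List α) (u : ℕ → α) : ℕ → ℕ → ℕ
  | 0, i => i
  | m + 1, i => partialSum (fun j => (s (u j)).length) (Rpos s u m i)

section
variable {α : Type*} {s : α → List α} {u : ℕ → α}

lemma factorAt_s (hfix : SubstFix s u) (i : ℕ) :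
    factorAt u (partialSum (fun j => (s (u j)).length) i) (s (u i)) :=
  factorAt_iff.mpr (fun j h => hfix i j h)

lemma factorAt_cons {a : ℕ} {c : α} {w : List α} (h : factorAt u a (c :: w)) :
    c = u a ∧ factorAt u (a + 1) w := by
  rw [factorAt_iff] at h
  constructor
  · exact (h 0 (by simp)).symm
  · rw [factorAt_iff]
    intro j hj
    have := h (j + 1) (by simpa using hj)
    simp only [List.get_eq_getElem, List.getElem_cons_succ] at this ⊢
    rw [← this]
    congr 1
    omega

lemma subst_image (hfix : SubstFix s u) :
    ∀ (w : List α) (a : ℕ), factorAt u a w →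
      factorAt u (partialSum (fun j => (s (u j)).length) a) ((w.map s).flatten) := by
  intro w
  induction w with
  | nil => intro a _; exact factorAt_nil u _
  | cons c w ih =>
    intro a hw
    obtain ⟨hc, hw'⟩ := factorAt_cons hw
    simp only [List.map_cons, List.flatten_cons]
    subst hc
    refine factorAt_append (factorAt_s hfix a) ?_
    have : partialSum (fun j => (s (u j)).length) a + (s (u a)).length
        = partialSum (fun j => (s (u j)).length) (a + 1) := rfl
    rw [this]
    exact ih (a + 1) hw'

lemma block_at (hfix : SubstFix s u) (m i : ℕ) :
    factorAt u (Rpos s u m i) (substIter s m (u i)) := by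
  induction m with
  | zero =>
    rw [factorAt_iff]
    intro j hj
    have h0 : j = 0 := by simpa [substIter] using hj
    subst h0
    simp [Rpos, substIter]
  | succ m ih =>
    show factorAt u (partialSum _ (Rpos s u m i)) ((substIter s m (u i)).map s).flatten
    exact subst_image hfix _ _ ih

lemma partialSum_flatten (l : List α) (g : ℕ → α)
    (hg : ∀ j (h : j < l.length), g j = l.get ⟨j, h⟩) :
    partialSum (fun j => (s (g j)).length) l.length = ((l.map s).flatten).length := by
  induction l generalizing g with
  | nil => rfl
  | cons c l ih =>
    have h1 : (c :: l).length = 1 + l.length := by simp; omega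
    rw [h1, partialSum_add]
    have h2 : partialSum (fun j => (s (g j)).length) 1 = (s c).length := by
      have := hg 0 (by simp)
      simp [partialSum, this]
    rw [h2]
    have h3 := ih (fun j => g (1 + j)) (fun j hj => by
      have := hg (1 + j) (by simp only [List.length_cons]; omega)
      simp only [List.get_eq_getElem] at this ⊢
      rw [this]
      have e : 1 + j = j + 1 := by omega
      simp only [e, List.getElem_cons_succ])
    simp only [List.map_cons, List.flatten_cons, List.length_append]
    rw [← h3]

lemma Rpos_zero (m : ℕ) : Rpos s u m 0 = 0 := by
  induction m with
  | zero => rfl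
  | succ m ih => show partialSum _ (Rpos s u m 0) = 0; rw [ih]; rfl

lemma Rpos_succ (hfix : SubstFix s u) (m i : ℕ) :
    Rpos s u m (i + 1) = Rpos s u m i + (substIter s m (u i)).length := by
  induction m with
  | zero => simp [Rpos, substIter]
  | succ m ih =>
    show partialSum _ (Rpos s u m (i+1)) = partialSum _ (Rpos s u m i) + _
    rw [ih, partialSum_add]
    congr 1
    have hb := block_at hfix m i
    rw [factorAt_iff] at hb
    exact partialSum_flatten (substIter s m (u i)) _ (fun j hj => hb j hj)

lemma le_Rpos (hfix : SubstFix s u) (hne : ∀ b, s b ≠ []) (m i : ℕ) :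
    i ≤ Rpos s u m i := by
  induction i with
  | zero => omega
  | succ i ih =>
    rw [Rpos_succ hfix]
    have := substIter_length_pos s hne m (u i)
    omega

lemma flatten_length_ge (g : α → List α) (c : ℕ) (l : List α)
    (h : ∀ x ∈ l, c ≤ (g x).length) :
    c * l.length ≤ ((l.map g).flatten).length := by
  induction l with
  | nil => simp
  | cons d l ih =>
    simp only [List.map_cons, List.flatten_cons, List.length_append, List.length_cons]
    have h1 := h d (by simp)
    have h2 := ih (fun x hx => h x (by simp [hx]))
    rw [Nat.mul_succ]
    omega

lemma factorAt_of_infix {f l : List α} {a : ℕ} (hinf : f <:+: l)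
    (hl : factorAt u a l) :
    ∃ o, o + f.length ≤ l.length ∧ factorAt u (a + o) f := by
  obtain ⟨t, x, hx⟩ := hinf
  subst hx
  refine ⟨t.length, by simp only [List.length_append]; omega, ?_⟩
  rw [factorAt_iff] at hl ⊢
  intro j hj
  have hlen : t.length + j < (t ++ f ++ x).length := by
    simp only [List.length_append]; omega
  have := hl (t.length + j) hlen
  simp only [List.get_eq_getElem] at this ⊢
  rw [← Nat.add_assoc] at this
  rw [this]
  rw [List.getElem_append_left (by simp only [List.length_append]; omega)]
  rw [List.getElem_append_right (by omega)]
  congr 1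
  omega

lemma infix_of_window {f l : List α} {a p : ℕ} (hl : factorAt u a l)
    (hf : factorAt u (a + p) f) (hlen : p + f.length ≤ l.length) :
    f <:+: l := by
  have hEq : f = (l.drop p).take f.length := by
    apply List.ext_getElem
    · simp; omega
    · intro j h1 h2
      rw [factorAt_iff] at hf hl
      have e1 := hf j h1
      have e2 := hl (p + j) (by omega)
      simp only [List.get_eq_getElem] at e1 e2
      simp only [List.getElem_take, List.getElem_drop]
      rw [← e2, ← e1, Nat.add_assoc]
  rw [hEq]
  exact ((List.take_prefix _ _).isInfix).trans ((List.drop_suffix _ _).isInfix)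

end

/-- Every fixed point of a primitive substitution over a finite alphabet is
uniformly recurrent. -/
theorem stmt19 {α : Type*} [Fintype α] (s : α → List α)
    (hne : ∀ b, s b ≠ [])
    (hprim : ∃ k, 1 ≤ k ∧ ∀ b c : α, c ∈ substIter s k b)
    (u : ℕ → α) (hfix : SubstFix s u) :
    UniformlyRecurrent u := by
  classical
  obtain ⟨k, hk1, hk⟩ := hprim
  intro f hf
  obtain ⟨p, hpf⟩ := hf
  rcases subsingleton_or_nontrivial α with hsub | hnt
  · refine ⟨0, fun P => ⟨P, le_refl _, by omega, ?_⟩⟩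
    rw [factorAt_iff]
    intro j hj
    exact Subsingleton.elim _ _
  · have h2 : ∀ b : α, 2 ≤ (substIter s k b).length := by
      intro b
      obtain ⟨x, y, hxy⟩ := exists_pair_ne α
      have hsub2 : ({x, y} : Finset α) ⊆ (substIter s k b).toFinset := by
        intro z hz
        simp only [Finset.mem_insert, Finset.mem_singleton] at hz
        rcases hz with rfl | rfl <;> simp [hk b]
      have hcard := Finset.card_le_card hsub2
      rw [Finset.card_insert_of_notMem (by simp [hxy]), Finset.card_singleton] at hcard
      exact hcard.trans (List.toFinset_card_le _)
    have hgrow : ∀ n (b : α), 2 ^ n ≤ (substIter s (n * k) b).length := by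
      intro n
      induction n with
      | zero =>
        intro b
        simpa [Nat.one_le_iff_ne_zero, Nat.pos_iff_ne_zero] using substIter_length_pos s hne 0 b
      | succ n ih =>
        intro b
        have e : (n + 1) * k = k + n * k := by ring
        rw [e, substIter_comp]
        calc 2 ^ (n + 1) = 2 * 2 ^ n := by ring
        _ ≤ 2 * (substIter s (n * k) b).length :=
            Nat.mul_le_mul_left 2 (ih b)
        _ = 2 * ((substIter s (n * k) b).length) := rfl
        _ ≤ _ := by
          have := flatten_length_ge (substIter s k) 2 (substIter s (n * k) b)
            (fun x _ => h2 x)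
          omega
    set n0 := p + f.length + 1 with hn0
    set m0 := n0 * k with hm0
    have hlen0 : p + f.length ≤ (substIter s m0 (u 0)).length := by
      have ha : n0 < 2 ^ n0 := Nat.lt_two_pow_self
      have hb := hgrow n0 (u 0)
      rw [← hm0] at hb
      omega
    have hB0 : factorAt u 0 (substIter s m0 (u 0)) := by
      have := block_at hfix m0 0
      rwa [Rpos_zero] at this
    have hfin : f <:+: substIter s m0 (u 0) := by
      refine infix_of_window hB0 ?_ hlen0
      simpa using hpf
    have hoccl : ∀ b : α, f <:+: substIter s (m0 + k) b := by
      intro b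
      rw [substIter_comp]
      exact hfin.trans (List.infix_of_mem_flatten (List.mem_map_of_mem (hk b (u 0))))
    set m := m0 + k with hm
    set M := Finset.univ.sup (fun b : α => (substIter s m b).length) with hMdef
    have hMb : ∀ b : α, (substIter s m b).length ≤ M :=
      fun b => Finset.le_sup (f := fun b : α => (substIter s m b).length) (Finset.mem_univ b)
    refine ⟨2 * M, fun P => ?_⟩
    have hex : ∃ i, P ≤ Rpos s u m i := ⟨P, le_Rpos hfix hne m P⟩
    have hPi : P ≤ Rpos s u m (Nat.find hex) := Nat.find_spec hex
    set i := Nat.find hex with hidef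
    have hup : Rpos s u m i ≤ P + M := by
      rcases Nat.eq_zero_or_pos i with h0 | hpos
      · rw [h0, Rpos_zero]; omega
      · have hlt : ¬ P ≤ Rpos s u m (i - 1) := Nat.find_min hex (by omega)
        have hstep := Rpos_succ hfix m (i - 1)
        have hM' := hMb (u (i - 1))
        have e : i - 1 + 1 = i := by omega
        rw [e] at hstep
        omega
    obtain ⟨o, ho, hfo⟩ := factorAt_of_infix (hoccl (u i)) (block_at hfix m i)
    refine ⟨Rpos s u m i + o, by omega, ?_, hfo⟩
    have := hMb (u i)
    omega
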